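/- arXiv:2305.05342 — 2 statements merged into one kernel-verified Lean document; each statement's English description precedes it below -/
import Mathlib

section
/- The function f(x) = (μ(1+κ)^{(μ+1)/2} / (γ̄ e^{μκ})) (x/(γ̄ κ))^{(μ−1)/2} e^{−μ(1+κ)x/γ̄} I_{μ−1}(2μ √(κ(1+κ)x/γ̄)) is a probability density on (0, ∞), i.e., ∫₀^∞ f(x) dx = 1. -/
open Real MeasureTheory

lemma rpow_half_nat {u : ℝ} (hu : 0 ≤ u) (m : ℕ) :
    u ^ ((m : ℝ) / 2) = Real.sqrt u ^ m := by
  rw [Real.sqrt_eq_rpow, ← Real.rpow_natCast (u ^ ((1:ℝ)/2)) m, ← Real.rpow_mul hu]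
  ring_nf

lemma integral_pow_exp (n : ℕ) {a : ℝ} (ha : 0 < a) :
    ∫ x in Set.Ioi (0:ℝ), x ^ n * Real.exp (-(a * x)) = n.factorial / a ^ (n + 1) := by
  have h := integral_rpow_mul_exp_neg_mul_Ioi (a := (n : ℝ) + 1) (r := a) (by positivity) ha
  rw [setIntegral_congr_fun measurableSet_Ioi
    (g := fun t : ℝ => t ^ (((n : ℝ) + 1) - 1) * Real.exp (-(a * t)))
    (fun t _ => by
      simp only [show ((n : ℝ) + 1) - 1 = ((n : ℕ) : ℝ) by ring, Real.rpow_natCast]), h,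
    Real.Gamma_nat_eq_factorial,
    show ((n : ℝ) + 1) = ((n + 1 : ℕ) : ℝ) by push_cast; ring, Real.rpow_natCast,
    div_pow, one_pow]
  field_simp

lemma integrableOn_pow_exp (n : ℕ) {a : ℝ} (ha : 0 < a) :
    IntegrableOn (fun x : ℝ => x ^ n * Real.exp (-(a * x))) (Set.Ioi 0) := by
  have h := integrableOn_rpow_mul_exp_neg_mul_rpow (s := (n : ℝ)) (p := 1)
    (lt_of_lt_of_le (by norm_num) (Nat.cast_nonneg n)) (by norm_num) ha
  refine h.congr_fun (fun x _ => ?_) measurableSet_Ioi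
  simp only [Real.rpow_natCast, Real.rpow_one, neg_mul]

/-- Modified Bessel function of the first kind of integer order `n`. -/
noncomputable def besselI (n : ℤ) (x : ℝ) : ℝ :=
  ∑' k : ℕ, (x / 2) ^ (2 * k + n.natAbs) /
    ((Nat.factorial k : ℝ) * (Nat.factorial (k + n.natAbs) : ℝ))

theorem stmt_5 (μ : ℕ) (hμ : 1 ≤ μ) (κ γbar : ℝ) (hκ : 0 < κ) (hγ : 0 < γbar) :
    ∫ x in Set.Ioi (0:ℝ),
      ((μ : ℝ) * (1 + κ) ^ (((μ : ℝ) + 1) / 2) / (γbar * Real.exp ((μ : ℝ) * κ))) *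
        (x / (γbar * κ)) ^ (((μ : ℝ) - 1) / 2) *
        Real.exp (-(μ : ℝ) * (1 + κ) * x / γbar) *
        besselI ((μ : ℤ) - 1) (2 * (μ : ℝ) * Real.sqrt (κ * (1 + κ) * x / γbar)) = 1 := by
  obtain ⟨m, rfl⟩ : ∃ m, μ = m + 1 := ⟨μ - 1, (Nat.succ_pred_eq_of_pos hμ).symm⟩
  have h1κ : (0:ℝ) < 1 + κ := by linarith
  have hμR : (0:ℝ) < ((m + 1 : ℕ) : ℝ) := by positivity
  have hnat : (((m + 1 : ℕ) : ℤ) - 1).natAbs = m := by simp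
  set a : ℝ := ((m + 1 : ℕ) : ℝ) * (1 + κ) / γbar with ha_def
  have ha : 0 < a := by rw [ha_def]; positivity
  set C : ℝ := ((m + 1 : ℕ) : ℝ) * (1 + κ) ^ ((((m + 1 : ℕ) : ℝ) + 1) / 2) /
      (γbar * Real.exp (((m + 1 : ℕ) : ℝ) * κ)) with hC_def
  have hC : 0 < C := by rw [hC_def]; positivity
  set d : ℕ → ℝ := fun k => C * ((m + 1 : ℕ) : ℝ) ^ (2 * k + m) * Real.sqrt (1 + κ) ^ m *
      (κ * (1 + κ) / γbar) ^ k /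
      (γbar ^ m * ((Nat.factorial k : ℝ) * (Nat.factorial (k + m) : ℝ))) with hd_def
  have hd0 : ∀ k, 0 ≤ d k := by
    intro k
    rw [hd_def, hC_def]
    positivity
  -- pointwise rewrite of the integrand
  have hpt : Set.EqOn
      (fun x : ℝ => C * (x / (γbar * κ)) ^ ((((m + 1 : ℕ) : ℝ) - 1) / 2) *
        Real.exp (-((m + 1 : ℕ) : ℝ) * (1 + κ) * x / γbar) *
        besselI (((m + 1 : ℕ) : ℤ) - 1) (2 * ((m + 1 : ℕ) : ℝ) *
          Real.sqrt (κ * (1 + κ) * x / γbar)))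
      (fun x : ℝ => ∑' k : ℕ, d k * (x ^ (k + m) * Real.exp (-(a * x))))
      (Set.Ioi 0) := by
    intro x hx
    have hx0 : (0:ℝ) < x := hx
    simp only [besselI, hnat]
    rw [← tsum_mul_left]
    refine tsum_congr fun k => ?_
    have hs0 : (0:ℝ) ≤ κ * (1 + κ) * x / γbar := by positivity
    have hexp : -((m + 1 : ℕ) : ℝ) * (1 + κ) * x / γbar = -(a * x) := by
      rw [ha_def]; ring
    have hhalf : (((m + 1 : ℕ) : ℝ) - 1) / 2 = ((m : ℕ) : ℝ) / 2 := by push_cast; ring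
    rw [hexp, hhalf, rpow_half_nat (by positivity) m,
      show 2 * ((m + 1 : ℕ) : ℝ) * Real.sqrt (κ * (1 + κ) * x / γbar) / 2
        = ((m + 1 : ℕ) : ℝ) * Real.sqrt (κ * (1 + κ) * x / γbar) by ring,
      mul_pow, show Real.sqrt (κ * (1 + κ) * x / γbar) ^ (2 * k + m)
        = (κ * (1 + κ) * x / γbar) ^ k * Real.sqrt (κ * (1 + κ) * x / γbar) ^ m by
          rw [pow_add, pow_mul, Real.sq_sqrt hs0],
      show (κ * (1 + κ) * x / γbar) ^ k = (κ * (1 + κ) / γbar) ^ k * x ^ k by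
          rw [← mul_pow]; congr 1; ring]
    have hcomb : Real.sqrt (x / (γbar * κ)) ^ m * Real.sqrt (κ * (1 + κ) * x / γbar) ^ m
        = Real.sqrt (1 + κ) ^ m * (x / γbar) ^ m := by
      rw [← mul_pow, ← Real.sqrt_mul (by positivity),
        show x / (γbar * κ) * (κ * (1 + κ) * x / γbar) = (1 + κ) * (x / γbar) ^ 2 by
          field_simp,
        Real.sqrt_mul h1κ.le, Real.sqrt_sq (by positivity), mul_pow]
    have hfk : (Nat.factorial k : ℝ) ≠ 0 := by positivity
    have hfkm : (Nat.factorial (k + m) : ℝ) ≠ 0 := by positivity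
    simp only [hd_def]
    linear_combination (C * Real.exp (-(a * x)) * ((m + 1 : ℕ) : ℝ) ^ (2 * k + m) *
      (κ * (1 + κ) / γbar) ^ k * x ^ k /
      ((Nat.factorial k : ℝ) * (Nat.factorial (k + m) : ℝ))) * hcomb
  rw [setIntegral_congr_fun measurableSet_Ioi hpt]
  -- swap integral and sum
  set E : ℝ := C * Real.sqrt (1 + κ) ^ m * γbar / (((m + 1 : ℕ) : ℝ) * (1 + κ) ^ (m + 1))
    with hE_def
  have h_int : ∀ k : ℕ, Integrable (fun x : ℝ => d k * (x ^ (k + m) * Real.exp (-(a * x))))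
      (volume.restrict (Set.Ioi 0)) := fun k => (integrableOn_pow_exp (k + m) ha).const_mul _
  have hval : ∀ k : ℕ, (∫ x in Set.Ioi (0:ℝ), d k * (x ^ (k + m) * Real.exp (-(a * x))))
      = E * (((m + 1 : ℕ) : ℝ) * κ) ^ k / (Nat.factorial k : ℝ) := by
    intro k
    rw [integral_const_mul, integral_pow_exp (k + m) ha]
    simp only [hd_def]
    have hfk : (Nat.factorial k : ℝ) ≠ 0 := by positivity
    have hfkm : (Nat.factorial (k + m) : ℝ) ≠ 0 := by positivity
    have hKsplit : (κ * (1 + κ) / γbar) ^ k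
        = (((m + 1 : ℕ) : ℝ) * κ) ^ k * a ^ k / ((((m + 1 : ℕ) : ℝ)) ^ 2) ^ k := by
      rw [← mul_pow, ← div_pow]
      congr 1
      rw [ha_def]
      field_simp
    have hapow : a ^ (m + 1) = ((m + 1 : ℕ) : ℝ) ^ (m + 1) * (1 + κ) ^ (m + 1) / γbar ^ (m + 1) := by
      rw [ha_def, div_pow, mul_pow]
    rw [hKsplit, show k + m + 1 = k + (m + 1) by omega, pow_add a k (m + 1), hapow,
      show 2 * k + m = 2 * k + m from rfl, pow_add (((m + 1 : ℕ) : ℝ)) (2 * k) m, pow_mul,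
      hE_def]
    have h1 : ((((m + 1 : ℕ) : ℝ)) ^ 2) ^ k ≠ 0 := by positivity
    have h2 : a ^ k ≠ 0 := by positivity
    have h3 : ((1 + κ) : ℝ) ^ (m + 1) ≠ 0 := by positivity
    field_simp
    ring
  have hnorm : ∀ k : ℕ,
      (∫ x in Set.Ioi (0:ℝ), ‖d k * (x ^ (k + m) * Real.exp (-(a * x)))‖)
      = E * (((m + 1 : ℕ) : ℝ) * κ) ^ k / (Nat.factorial k : ℝ) := by
    intro k
    rw [← hval k]
    refine setIntegral_congr_fun measurableSet_Ioi fun x hx => ?_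
    have hx0 : (0:ℝ) < x := hx
    rw [Real.norm_eq_abs, abs_of_nonneg]
    exact mul_nonneg (hd0 k) (by positivity)
  have h_sum : Summable fun k : ℕ =>
      ∫ x in Set.Ioi (0:ℝ), ‖d k * (x ^ (k + m) * Real.exp (-(a * x)))‖ := by
    refine Summable.congr ?_ (fun k => (hnorm k).symm)
    simp_rw [mul_div_assoc]
    exact (Real.summable_pow_div_factorial _).mul_left E
  rw [← integral_tsum_of_summable_integral_norm h_int h_sum]
  rw [tsum_congr hval]
  simp_rw [mul_div_assoc]
  rw [tsum_mul_left, show (∑' k : ℕ, (((m + 1 : ℕ) : ℝ) * κ) ^ k / (Nat.factorial k : ℝ))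
      = Real.exp (((m + 1 : ℕ) : ℝ) * κ) by
        rw [Real.exp_eq_exp_ℝ, NormedSpace.exp_eq_tsum_div]]
  have hkey : Real.sqrt (1 + κ) ^ (m + 2) * Real.sqrt (1 + κ) ^ m = (1 + κ) ^ (m + 1) := by
    rw [← pow_add, show m + 2 + m = 2 * (m + 1) by ring, pow_mul, Real.sq_sqrt h1κ.le]
  have hrp : (1 + κ) ^ ((((m + 1 : ℕ) : ℝ) + 1) / 2) = Real.sqrt (1 + κ) ^ (m + 2) := by
    rw [show (((m + 1 : ℕ) : ℝ) + 1) / 2 = (((m + 2 : ℕ) : ℝ)) / 2 by push_cast; ring,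
      rpow_half_nat h1κ.le]
  rw [hE_def, hC_def, hrp]
  push_cast
  have hexp0 : Real.exp (((m + 1 : ℕ) : ℝ) * κ) ≠ 0 := (Real.exp_pos _).ne'
  have h1κ' : (1 + κ) ^ (m + 1) ≠ 0 := by positivity
  field_simp
  linear_combination hkey
end

section
/- For the κ–μ SNR density f, the moment generating function satisfies ∫₀^∞ e^{sx} f(x) dx = (μ(1+κ)/(μ(1+κ) − γ̄ s))^μ exp( μκ γ̄ s / (μ(1+κ) − γ̄ s) ) for all real s < μ(1+κ)/γ̄. -/
open Real MeasureTheory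

open Set in
lemma aux_integrable (n : ℕ) {b : ℝ} (hb : 0 < b) :
    IntegrableOn (fun x : ℝ => x ^ n * Real.exp (-(b * x))) (Set.Ioi 0) := by
  have h := integrableOn_rpow_mul_exp_neg_mul_rpow (s := (n:ℝ)) (p := 1)
    (by exact_mod_cast neg_one_lt_zero.trans_le (Nat.cast_nonneg n)) zero_lt_one hb
  refine h.congr_fun (fun x hx => ?_) measurableSet_Ioi
  simp [Real.rpow_natCast, Real.rpow_one, neg_mul]

open Set in
lemma aux_gamma (n : ℕ) {b : ℝ} (hb : 0 < b) :
    ∫ x in Set.Ioi (0:ℝ), x ^ n * Real.exp (-(b * x)) = (Nat.factorial n : ℝ) / b ^ (n+1) := by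
  have h := Real.integral_rpow_mul_exp_neg_mul_Ioi (a := (n:ℝ)+1) (by positivity) hb
  have h1 : ∀ x ∈ Set.Ioi (0:ℝ), x ^ ((n:ℝ)+1-1) * Real.exp (-(b*x)) = x ^ n * Real.exp (-(b*x)) := by
    intro x hx
    rw [add_sub_cancel_right, Real.rpow_natCast]
  rw [setIntegral_congr_fun measurableSet_Ioi h1] at h
  rw [h, Real.Gamma_nat_eq_factorial,
    show ((n:ℝ)+1) = ((n+1 : ℕ) : ℝ) by push_cast; ring, Real.rpow_natCast]
  field_simp
  rw [← mul_pow, one_div, inv_mul_cancel₀ hb.ne', one_pow]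

lemma aux_alg (k m : ℕ) (Es E2 Eb P S R C M w T x D F : ℝ)
    (hexp : Es * E2 = Eb) (hkey : P * S ^ m = R * x ^ m)
    (hC : C * R * M ^ m = D) (hw : M ^ 2 * w = T * x) :
    Es * (C * P * E2 * (M ^ (2*k+m) * (w ^ k * S ^ m) / F)) =
      D * T ^ k / F * (x ^ (k+m) * Eb) := by
  have h1 : (M^2*w)^k = (T*x)^k := by rw [hw]
  calc Es * (C * P * E2 * (M ^ (2*k+m) * (w ^ k * S ^ m) / F))
      = (Es * E2) * (P * S^m) * C * ((M^2*w)^k * M^m) / F := by ring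
    _ = Eb * (R * x^m) * C * ((T*x)^k * M^m) / F := by rw [hexp, hkey, h1]
    _ = (C * R * M^m) * T^k / F * (x^(k+m) * Eb) := by ring
    _ = D * T^k / F * (x^(k+m) * Eb) := by rw [hC]

open Set in
theorem stmt_7 (μ : ℕ) (hμ : 1 ≤ μ) (κ γbar : ℝ) (hκ : 0 < κ) (hγ : 0 < γbar)
    (s : ℝ) (hs : s < (μ : ℝ) * (1 + κ) / γbar) :
    ∫ x in Set.Ioi (0:ℝ),
      Real.exp (s * x) *
        (((μ : ℝ) * (1 + κ) ^ (((μ : ℝ) + 1) / 2) / (γbar * Real.exp ((μ : ℝ) * κ))) *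
          (x / (γbar * κ)) ^ (((μ : ℝ) - 1) / 2) *
          Real.exp (-(μ : ℝ) * (1 + κ) * x / γbar) *
          besselI ((μ : ℤ) - 1) (2 * (μ : ℝ) * Real.sqrt (κ * (1 + κ) * x / γbar))) =
      ((μ : ℝ) * (1 + κ) / ((μ : ℝ) * (1 + κ) - γbar * s)) ^ μ *
        Real.exp ((μ : ℝ) * κ * γbar * s / ((μ : ℝ) * (1 + κ) - γbar * s)) := by
  have hμ1 : (1:ℝ) ≤ (μ:ℝ) := by exact_mod_cast hμ
  have hμ0 : (0:ℝ) < (μ:ℝ) := by linarith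
  have hκ1 : (0:ℝ) < 1 + κ := by linarith
  set m : ℕ := μ - 1 with hm
  have hμeq : μ = m + 1 := (Nat.succ_pred_eq_of_pos hμ).symm
  have hμm : (μ:ℝ) = (m:ℝ) + 1 := by rw [hμeq]; push_cast; ring
  have hnatAbs : ((μ:ℤ) - 1).natAbs = m := by omega
  set b : ℝ := (μ:ℝ) * (1 + κ) / γbar - s with hbdef
  have hb : 0 < b := by rw [hbdef]; linarith
  set t : ℝ := (μ:ℝ)^2 * κ * (1+κ) / γbar with htdef
  set D : ℝ := (μ:ℝ)^(m+1) * (1+κ)^(m+1) / (γbar^(m+1) * Real.exp ((μ:ℝ)*κ)) with hD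
  have hD0 : 0 < D := by rw [hD]; positivity
  set c : ℕ → ℝ := fun k => D * t^k / ((Nat.factorial k : ℝ) * (Nat.factorial (k+m) : ℝ))
    with hc
  have hc0 : ∀ k, 0 ≤ c k := by
    intro k; rw [hc]
    have := hD0.le
    positivity
  -- the constant in front
  set C₁ : ℝ := (μ : ℝ) * (1 + κ) ^ (((μ : ℝ) + 1) / 2) / (γbar * Real.exp ((μ : ℝ) * κ))
    with hC₁
  have hC : C₁ * ((1+κ)/γbar^2) ^ ((m:ℝ)/2) * (μ:ℝ)^m = D := by
    have h1 : ((1+κ)/γbar^2 : ℝ) ^ ((m:ℝ)/2) = (1+κ)^((m:ℝ)/2) / γbar^m := by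
      rw [Real.div_rpow hκ1.le (by positivity)]
      congr 1
      rw [← Real.rpow_natCast γbar 2, ← Real.rpow_mul hγ.le, ← Real.rpow_natCast γbar m]
      congr 1
      push_cast; ring
    have h2 : (1+κ:ℝ) ^ (((μ:ℝ)+1)/2) * (1+κ)^((m:ℝ)/2) = (1+κ)^(m+1) := by
      rw [← Real.rpow_add hκ1, ← Real.rpow_natCast (1+κ) (m+1)]
      congr 1
      rw [hμm]; push_cast; ring
    rw [hC₁, h1, hD]
    field_simp
    calc _
        = ((1+κ:ℝ)^(((μ:ℝ)+1)/2) * (1+κ)^((m:ℝ)/2)) * ((μ:ℝ) * (μ:ℝ)^m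
          * γbar^(m+1)) := by ring
      _ = _ := by
          rw [h2]; ring
  clear_value b t D c C₁
  -- pointwise identity on Ioi 0
  have hpoint : ∀ x ∈ Set.Ioi (0:ℝ),
      Real.exp (s * x) * (C₁ * (x / (γbar * κ)) ^ (((μ : ℝ) - 1) / 2) *
        Real.exp (-(μ : ℝ) * (1 + κ) * x / γbar) *
        besselI ((μ : ℤ) - 1) (2 * (μ : ℝ) * Real.sqrt (κ * (1 + κ) * x / γbar))) =
      ∑' k : ℕ, c k * (x ^ (k+m) * Real.exp (-(b * x))) := by
    intro x hx
    rw [Set.mem_Ioi] at hx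
    have hw : (0:ℝ) ≤ κ * (1 + κ) * x / γbar := by positivity
    have hKey : (x / (γbar * κ)) ^ (((μ : ℝ) - 1) / 2) *
        (Real.sqrt (κ * (1 + κ) * x / γbar)) ^ m
        = ((1+κ)/γbar^2) ^ ((m:ℝ)/2) * x ^ m := by
      have hs1 : (Real.sqrt (κ * (1 + κ) * x / γbar)) ^ m
          = (κ * (1 + κ) * x / γbar) ^ ((m:ℝ)/2) := by
        rw [← Real.rpow_natCast (Real.sqrt _) m, Real.sqrt_eq_rpow, ← Real.rpow_mul hw]
        congr 1
        ring
      have hμp : ((μ:ℝ)-1)/2 = (m:ℝ)/2 := by rw [hμm]; ring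
      rw [hs1, hμp, ← Real.mul_rpow (by positivity) hw]
      have hprod : x / (γbar * κ) * (κ * (1 + κ) * x / γbar) = x^2 * ((1+κ)/γbar^2) := by
        field_simp
      rw [hprod, Real.mul_rpow (by positivity) (by positivity)]
      have hx2 : ((x^2 : ℝ)) ^ ((m:ℝ)/2) = x ^ m := by
        rw [← Real.rpow_natCast x 2, ← Real.rpow_mul hx.le, ← Real.rpow_natCast x m]
        congr 1
        push_cast
        ring
      rw [hx2]
      ring
    have hexpx : Real.exp (s*x) * Real.exp (-(μ:ℝ)*(1+κ)*x/γbar) = Real.exp (-(b*x)) := by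
      rw [← Real.exp_add]
      congr 1
      rw [hbdef]
      field_simp
      ring
    have hwT : (μ:ℝ)^2 * (κ*(1+κ)*x/γbar) = t * x := by
      rw [htdef]
      field_simp
    rw [besselI, hnatAbs, ← tsum_mul_left, ← tsum_mul_left]
    refine tsum_congr fun k => ?_
    have h22 : 2 * (μ:ℝ) * Real.sqrt (κ*(1+κ)*x/γbar) / 2
        = (μ:ℝ) * Real.sqrt (κ*(1+κ)*x/γbar) := by ring
    have hS : Real.sqrt (κ*(1+κ)*x/γbar) ^ (2*k+m)
        = (κ*(1+κ)*x/γbar) ^ k * Real.sqrt (κ*(1+κ)*x/γbar) ^ m := by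
      rw [pow_add, pow_mul, Real.sq_sqrt hw]
    rw [h22, mul_pow, hS]
    simp only [hc]
    exact aux_alg k m _ _ _ _ _ _ _ _ _ _ _ _ _ hexpx hKey hC hwT
  rw [setIntegral_congr_fun measurableSet_Ioi hpoint]
  have hInt : ∀ k : ℕ, Integrable (fun x : ℝ => c k * (x ^ (k+m) * Real.exp (-(b * x))))
      (volume.restrict (Set.Ioi 0)) := by
    intro k
    exact ((aux_integrable (k+m) hb).const_mul (c k))
  have hnorm : ∀ k : ℕ, (∫ x in Set.Ioi (0:ℝ), ‖c k * (x ^ (k+m) * Real.exp (-(b * x)))‖)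
      = c k * (((k+m).factorial : ℝ) / b ^ (k+m+1)) := by
    intro k
    have heq : ∀ x ∈ Set.Ioi (0:ℝ), ‖c k * (x ^ (k+m) * Real.exp (-(b * x)))‖
        = c k * (x ^ (k+m) * Real.exp (-(b * x))) := by
      intro x hx
      rw [Set.mem_Ioi] at hx
      exact Real.norm_of_nonneg (mul_nonneg (hc0 k) (by positivity))
    rw [setIntegral_congr_fun measurableSet_Ioi heq, integral_const_mul,
      aux_gamma (k+m) hb]
  have hval : ∀ k : ℕ, c k * (((k+m).factorial : ℝ) / b ^ (k+m+1))
      = (D / b ^ (m+1)) * ((t/b) ^ k / (k.factorial : ℝ)) := by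
    intro k
    simp only [hc]
    rw [div_pow]
    have hf1 : ((k.factorial : ℝ)) ≠ 0 := Nat.cast_ne_zero.mpr k.factorial_ne_zero
    have hf2 : (((k+m).factorial : ℝ)) ≠ 0 := Nat.cast_ne_zero.mpr (k+m).factorial_ne_zero
    field_simp [hb.ne']
    ring
  have hSum : Summable (fun k : ℕ =>
      ∫ x in Set.Ioi (0:ℝ), ‖c k * (x ^ (k+m) * Real.exp (-(b * x)))‖) := by
    refine ((Real.summable_pow_div_factorial (t/b)).mul_left (D / b ^ (m+1))).congr fun k => ?_
    rw [hnorm k, hval k]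
  rw [← MeasureTheory.integral_tsum_of_summable_integral_norm hInt hSum]
  have htsum : ∀ k : ℕ, (∫ x in Set.Ioi (0:ℝ), c k * (x ^ (k+m) * Real.exp (-(b * x))))
      = (D / b ^ (m+1)) * ((t/b) ^ k / (k.factorial : ℝ)) := by
    intro k
    rw [integral_const_mul, aux_gamma (k+m) hb]
    exact hval k
  rw [tsum_congr htsum, tsum_mul_left]
  have hexpsum : (∑' k : ℕ, (t/b) ^ k / (k.factorial : ℝ)) = Real.exp (t/b) := by
    rw [Real.exp_eq_exp_ℝ, NormedSpace.exp_eq_tsum_div]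
  rw [hexpsum]
  -- final algebra
  have hB : 0 < (μ:ℝ)*(1+κ) - γbar*s := by
    have h := (lt_div_iff₀ hγ).mp hs
    nlinarith
  have hbB : b = ((μ:ℝ)*(1+κ) - γbar*s)/γbar := by
    rw [hbdef]
    field_simp
  have hPμ : ((μ:ℝ)*(1+κ)/((μ:ℝ)*(1+κ)-γbar*s))^μ
      = ((μ:ℝ)*(1+κ)/((μ:ℝ)*(1+κ)-γbar*s))^(m+1) :=
    congrArg (fun n => ((μ:ℝ)*(1+κ)/((μ:ℝ)*(1+κ)-γbar*s))^n) hμeq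
  rw [hPμ]
  have hE : Real.exp (t/b) = Real.exp ((μ:ℝ)*κ*γbar*s/((μ:ℝ)*(1+κ)-γbar*s))
      * Real.exp ((μ:ℝ)*κ) := by
    rw [← Real.exp_add]
    congr 1
    rw [htdef, hbB]
    field_simp
    ring
  rw [hE, hD, hbB, div_pow, div_pow, mul_pow]
  field_simp [hB.ne']
end
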